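/- Let L ≥ 1 be an integer and set γ = (L+1)^{-1/L}, and run Peek Search with latency L and discount factor γ on a first-order (n = 1) time-homogeneous Markov reward instance whose transition digraph is complete (diameter Δ = 1). Then OPT ≤ (1 + 1/L)·(L+1)^{1/L}·ON; that is, the competitive ratio of Peek Search is at most (1 + 1/L)·(L+1)^{1/L}. -/

import Mathlib

open Finset

/-- Peek Search with latency L ≥ 1 and discount γ = (L+1)^{-1/L} on a
first-order (n = 1) time-homogeneous instance with complete transition digraph (Δ = 1)
is (1 + 1/L)·(L+1)^{1/L}-competitive: OPT ≤ (1 + 1/L)·(L+1)^{1/L}·ON.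

The states form a finite nonempty set `K`; `R y' y` is the (nonnegative, time-homogeneous)
reward of a transition from `y'` to `y`; `r t` is the effective reward function at time `t`:
it equals `R` on the horizon `{1,…,T}` away from the first `L+1` and last `L+1` time steps
(zero padding) and is `0` elsewhere.  `yhat` is the sequence produced by Peek Search from the
dummy initial state `y0`: at each time `i ∈ {1,…,T}` there is a path of length `L+1`
(a sequence agreeing with `yhat` strictly before `i`) starting with `yhat i` whose `γ`-discounted
reward is maximal among all such paths (ties broken arbitrarily).  `ON` is the total reward
collected by Peek Search; the conclusion bounds the total reward of every offline state
sequence starting from the dummy state, hence bounds OPT. -/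
theorem peek_search_competitive_first_order_complete
    (K : Type) [Fintype K] [Nonempty K]
    (L : ℕ) (hL : 1 ≤ L)
    (γ : ℝ) (hγ : γ = ((L : ℝ) + 1) ^ (-(1 : ℝ) / (L : ℝ)))
    (T : ℤ)
    (R : K → K → ℝ) (hR : ∀ y' y : K, 0 ≤ R y' y)
    (r : ℤ → K → K → ℝ)
    (hr : ∀ t : ℤ, r t = if ((L : ℤ) + 2 ≤ t ∧ t ≤ T - ((L : ℤ) + 1)) then R else 0)
    (y0 : K)
    (yhat : ℤ → K) (hyhat0 : ∀ t : ℤ, t ≤ 0 → yhat t = y0)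
    (hPS : ∀ i : ℤ, 1 ≤ i → i ≤ T →
      ∃ y : ℤ → K, (∀ t : ℤ, t < i → y t = yhat t) ∧ y i = yhat i ∧
        ∀ y' : ℤ → K, (∀ t : ℤ, t < i → y' t = yhat t) →
          (∑ j ∈ Finset.range (L + 1),
              γ ^ j * r (i + (j : ℤ)) (y' (i + (j : ℤ) - 1)) (y' (i + (j : ℤ))))
            ≤ ∑ j ∈ Finset.range (L + 1),
                γ ^ j * r (i + (j : ℤ)) (y (i + (j : ℤ) - 1)) (y (i + (j : ℤ))))
    (ON : ℝ) (hON : ON = ∑ i ∈ Finset.Icc (1 : ℤ) T, r i (yhat (i - 1)) (yhat i)) :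
    ∀ y : ℤ → K, (∀ t : ℤ, t ≤ 0 → y t = y0) →
      (∑ i ∈ Finset.Icc (1 : ℤ) T, r i (y (i - 1)) (y i))
        ≤ (1 + 1 / (L : ℝ)) * ((L : ℝ) + 1) ^ ((1 : ℝ) / (L : ℝ)) * ON := by
  classical
  intro y hy
  rcases le_or_gt T 0 with hT0 | hT1
  · rw [Finset.Icc_eq_empty (by omega : ¬ (1:ℤ) ≤ T)] at hON ⊢
    simp only [Finset.sum_empty] at hON ⊢
    rw [hON, mul_zero]
  -- basic real facts
  have hLR : (1:ℝ) ≤ (L:ℝ) := by exact_mod_cast hL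
  have hLpos : (0:ℝ) < L := by linarith
  have hB : (1:ℝ) < (L:ℝ) + 1 := by linarith
  have hBpos : (0:ℝ) < (L:ℝ) + 1 := by linarith
  have hγpos : 0 < γ := by rw [hγ]; exact Real.rpow_pos_of_pos hBpos _
  have hγlt1 : γ < 1 := by
    rw [hγ]
    exact Real.rpow_lt_one_of_one_lt_of_neg hB
      (div_neg_of_neg_of_pos (by norm_num) hLpos)
  have hγL : γ ^ L = ((L:ℝ) + 1)⁻¹ := by
    rw [hγ, ← Real.rpow_natCast (((L:ℝ)+1) ^ (-(1:ℝ)/(L:ℝ))) L, ← Real.rpow_mul hBpos.le]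
    rw [show (-(1:ℝ)/(L:ℝ)) * ((L:ℕ):ℝ) = -1 from by field_simp, Real.rpow_neg_one]
  -- reward facts
  have hrnn : ∀ (t : ℤ) (a b : K), 0 ≤ r t a b := by
    intro t a b; rw [hr t]; split_ifs with h
    · exact hR a b
    · simp
  have hrz : ∀ t : ℤ, (t < (L:ℤ) + 2 ∨ T - ((L:ℤ)+1) < t) → ∀ a b : K, r t a b = 0 := by
    intro t ht a b; rw [hr t, if_neg (by omega)]; simp
  -- chosen paths
  have hex : ∀ i : ℤ, ∃ p : ℤ → K,
      1 ≤ i → i ≤ T → ((∀ t : ℤ, t < i → p t = yhat t) ∧ p i = yhat i ∧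
        ∀ y' : ℤ → K, (∀ t : ℤ, t < i → y' t = yhat t) →
          (∑ j ∈ Finset.range (L + 1),
              γ ^ j * r (i + (j : ℤ)) (y' (i + (j : ℤ) - 1)) (y' (i + (j : ℤ))))
            ≤ ∑ j ∈ Finset.range (L + 1),
                γ ^ j * r (i + (j : ℤ)) (p (i + (j : ℤ) - 1)) (p (i + (j : ℤ)))) := by
    intro i
    by_cases h : 1 ≤ i ∧ i ≤ T
    · obtain ⟨p, h1, h2, h3⟩ := hPS i h.1 h.2
      exact ⟨p, fun _ _ => ⟨h1, h2, h3⟩⟩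
    · exact ⟨yhat, fun h1 h2 => absurd ⟨h1, h2⟩ h⟩
  choose P hP using hex
  let V : ℤ → ℝ := fun i => ∑ j ∈ Finset.range (L + 1),
      γ ^ j * r (i + (j : ℤ)) (P i (i + (j : ℤ) - 1)) (P i (i + (j : ℤ)))
  have hVdef : ∀ i, V i = ∑ j ∈ Finset.range (L + 1),
      γ ^ j * r (i + (j : ℤ)) (P i (i + (j : ℤ) - 1)) (P i (i + (j : ℤ))) := fun i => rfl
  have hVnn : ∀ i, 0 ≤ V i := fun i =>
    Finset.sum_nonneg fun j _ => mul_nonneg (pow_nonneg hγpos.le _) (hrnn _ _ _)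
  have hVhigh : ∀ i : ℤ, T < i → V i = 0 := by
    intro i hi
    apply Finset.sum_eq_zero; intro j _
    rw [hrz (i + (j:ℤ)) (Or.inr (by omega)), mul_zero]
  -- step inequality
  have hstep : ∀ i : ℤ, 1 ≤ i → i ≤ T →
      V i ≤ r i (yhat (i-1)) (yhat i) + γ * V (i+1) := by
    intro i h1 h2
    rcases eq_or_lt_of_le h2 with rfl | hlt
    · have hVT : V i = 0 := by
        apply Finset.sum_eq_zero; intro j _
        rw [hrz (i + (j:ℤ)) (Or.inr (by omega)), mul_zero]
      rw [hVT]
      exact add_nonneg (hrnn _ _ _) (mul_nonneg hγpos.le (hVnn _))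
    · obtain ⟨hPa, hPb, hPc⟩ := hP i h1 h2
      obtain ⟨hQa, hQb, hQc⟩ := hP (i+1) (by omega) (by omega)
      have hsplit : V i = (∑ j ∈ Finset.range L,
          γ ^ (j+1) * r (i + ((j:ℤ)+1)) (P i (i + ((j:ℤ)+1) - 1)) (P i (i + ((j:ℤ)+1))))
          + r i (yhat (i-1)) (yhat i) := by
        rw [hVdef i, Finset.sum_range_succ']
        have hA : ∀ j ∈ Finset.range L,
            γ ^ (j+1) * r (i + ((j+1:ℕ):ℤ)) (P i (i + ((j+1:ℕ):ℤ) - 1)) (P i (i + ((j+1:ℕ):ℤ)))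
            = γ ^ (j+1) * r (i + ((j:ℤ)+1)) (P i (i + ((j:ℤ)+1) - 1)) (P i (i + ((j:ℤ)+1))) := by
          intro j _; push_cast; ring_nf
        rw [Finset.sum_congr rfl hA]
        have hB : γ ^ (0:ℕ) * r (i + ((0:ℕ):ℤ)) (P i (i + ((0:ℕ):ℤ) - 1)) (P i (i + ((0:ℕ):ℤ)))
            = r i (yhat (i-1)) (yhat i) := by
          simp only [Nat.cast_zero, add_zero, pow_zero, one_mul]
          rw [hPa (i-1) (by omega), hPb]
        rw [hB]
      have htail : (∑ j ∈ Finset.range L,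
          γ ^ (j+1) * r (i + ((j:ℤ)+1)) (P i (i + ((j:ℤ)+1) - 1)) (P i (i + ((j:ℤ)+1))))
          ≤ γ * V (i+1) := by
        have heq : (∑ j ∈ Finset.range L,
            γ ^ (j+1) * r (i + ((j:ℤ)+1)) (P i (i + ((j:ℤ)+1) - 1)) (P i (i + ((j:ℤ)+1))))
            = γ * ∑ j ∈ Finset.range L,
              γ ^ j * r ((i+1) + (j:ℤ)) (P i ((i+1) + (j:ℤ) - 1)) (P i ((i+1) + (j:ℤ))) := by
          rw [Finset.mul_sum]
          apply Finset.sum_congr rfl; intro j _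
          rw [show i + ((j:ℤ)+1) = (i+1) + (j:ℤ) from by ring, pow_succ]
          ring
        rw [heq]
        apply mul_le_mul_of_nonneg_left _ hγpos.le
        calc ∑ j ∈ Finset.range L,
              γ ^ j * r ((i+1) + (j:ℤ)) (P i ((i+1) + (j:ℤ) - 1)) (P i ((i+1) + (j:ℤ)))
            ≤ ∑ j ∈ Finset.range (L+1),
              γ ^ j * r ((i+1) + (j:ℤ)) (P i ((i+1) + (j:ℤ) - 1)) (P i ((i+1) + (j:ℤ))) := by
              apply Finset.sum_le_sum_of_subset_of_nonneg
                (Finset.range_subset_range.mpr (Nat.le_succ L))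
              intro j _ _
              exact mul_nonneg (pow_nonneg hγpos.le _) (hrnn _ _ _)
          _ ≤ V (i+1) := by
              rw [hVdef (i+1)]
              apply hQc
              intro t ht
              rcases lt_or_eq_of_le (by omega : t ≤ i) with h | h
              · exact hPa t h
              · rw [h]; exact hPb
      rw [hsplit]
      linarith
  -- lower bound per step
  have hlow : ∀ i : ℤ, 1 ≤ i → i ≤ T →
      (∑ j ∈ Finset.range L,
        γ ^ (j+1) * r (i + ((j:ℤ)+1)) (y (i + ((j:ℤ)+1) - 1)) (y (i + ((j:ℤ)+1)))) ≤ V i := by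
    intro i h1 h2
    obtain ⟨hPa, hPb, hPc⟩ := hP i h1 h2
    set z : ℤ → K := fun t => if t < i then yhat t else y t with hz
    have hcand := hPc z (fun t ht => by simp [hz, if_pos ht])
    rw [← hVdef i] at hcand
    refine le_trans ?_ hcand
    rw [Finset.sum_range_succ']
    have h0 : 0 ≤ γ ^ 0 * r (i + ((0:ℕ):ℤ)) (z (i + ((0:ℕ):ℤ) - 1)) (z (i + ((0:ℕ):ℤ))) :=
      mul_nonneg (pow_nonneg hγpos.le _) (hrnn _ _ _)
    refine le_trans (le_of_eq ?_) (le_add_of_nonneg_right h0)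
    apply Finset.sum_congr rfl
    intro j _
    push_cast
    simp only [hz]
    rw [if_neg (by omega), if_neg (by omega)]
  -- total online bound
  set OPTy := ∑ i ∈ Finset.Icc (1:ℤ) T, r i (y (i - 1)) (y i) with hOPTy
  set S := ∑ i ∈ Finset.Icc (1:ℤ) T, V i with hS
  have hupper : S ≤ ON + γ * S := by
    calc S ≤ ∑ i ∈ Finset.Icc (1:ℤ) T, (r i (yhat (i-1)) (yhat i) + γ * V (i+1)) := by
          apply Finset.sum_le_sum
          intro i hi
          exact hstep i (Finset.mem_Icc.mp hi).1 (Finset.mem_Icc.mp hi).2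
      _ = ON + γ * ∑ i ∈ Finset.Icc (1:ℤ) T, V (i+1) := by
          rw [Finset.sum_add_distrib, ← Finset.mul_sum, hON]
      _ ≤ ON + γ * S := by
          apply add_le_add_right
          apply mul_le_mul_of_nonneg_left _ hγpos.le
          have himg : Finset.Icc (2:ℤ) (T+1) = Finset.image (· + 1) (Finset.Icc (1:ℤ) T) := by
            rw [Finset.image_add_right_Icc]; norm_num
          have h1 : ∑ i ∈ Finset.Icc (1:ℤ) T, V (i+1) = ∑ i ∈ Finset.Icc (2:ℤ) (T+1), V i := by
            rw [himg, Finset.sum_image (by intro a _ b _ h; simp only at h; omega)]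
          rw [h1]
          have h2 : Finset.Icc (2:ℤ) (T+1) = insert (T+1) (Finset.Icc 2 T) := by
            ext x; simp only [Finset.mem_Icc, Finset.mem_insert]; omega
          rw [h2, Finset.sum_insert (by simp only [Finset.mem_Icc]; omega),
            hVhigh (T+1) (by omega), zero_add]
          exact Finset.sum_le_sum_of_subset_of_nonneg
            (Finset.Icc_subset_Icc_left (by omega)) (fun i _ _ => hVnn i)
  -- shift sums of the offline rewards
  have hcore : ∀ a e : ℤ, a ≤ (L:ℤ)+2 → T - ((L:ℤ)+1) ≤ e →
      ∑ t ∈ Finset.Icc a e, r t (y (t-1)) (y t)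
        = ∑ t ∈ Finset.Icc ((L:ℤ)+2) (T - ((L:ℤ)+1)), r t (y (t-1)) (y t) := by
    intro a e ha he
    symm
    apply Finset.sum_subset (Finset.Icc_subset_Icc ha he)
    intro t ht hnt
    simp only [Finset.mem_Icc] at ht hnt
    exact hrz t (by omega) _ _
  have hshift : ∀ c : ℤ, 1 ≤ c → c ≤ (L:ℤ)+1 →
      ∑ i ∈ Finset.Icc (1:ℤ) T, r (i+c) (y (i+c-1)) (y (i+c)) = OPTy := by
    intro c hc1 hc2
    have himg : Finset.Icc (1+c) (T+c) = Finset.image (· + c) (Finset.Icc (1:ℤ) T) := by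
      rw [Finset.image_add_right_Icc]
    have h1 : ∑ i ∈ Finset.Icc (1:ℤ) T, r (i+c) (y (i+c-1)) (y (i+c))
        = ∑ t ∈ Finset.Icc (1+c) (T+c), r t (y (t-1)) (y t) := by
      rw [himg, Finset.sum_image (by intro a _ b _ h; simp only at h; omega)]
    rw [h1, hcore (1+c) (T+c) (by omega) (by omega), hOPTy, hcore 1 T (by omega) (by omega)]
  -- total lower bound
  have hlow2 : (∑ j ∈ Finset.range L, γ^(j+1)) * OPTy ≤ S := by
    calc (∑ j ∈ Finset.range L, γ^(j+1)) * OPTy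
        = ∑ j ∈ Finset.range L, γ^(j+1) * OPTy := by rw [Finset.sum_mul]
      _ = ∑ j ∈ Finset.range L, ∑ i ∈ Finset.Icc (1:ℤ) T,
            γ^(j+1) * r (i + ((j:ℤ)+1)) (y (i + ((j:ℤ)+1) - 1)) (y (i + ((j:ℤ)+1))) := by
          apply Finset.sum_congr rfl; intro j hj
          simp only [Finset.mem_range] at hj
          rw [← hshift ((j:ℤ)+1) (by omega) (by omega), Finset.mul_sum]
      _ = ∑ i ∈ Finset.Icc (1:ℤ) T, ∑ j ∈ Finset.range L,
            γ^(j+1) * r (i + ((j:ℤ)+1)) (y (i + ((j:ℤ)+1) - 1)) (y (i + ((j:ℤ)+1))) :=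
          Finset.sum_comm
      _ ≤ S := by
          apply Finset.sum_le_sum
          intro i hi
          exact hlow i (Finset.mem_Icc.mp hi).1 (Finset.mem_Icc.mp hi).2
  -- geometric sum identity
  have hgs : (1 - γ) * (∑ j ∈ Finset.range L, γ^(j+1)) = γ * (1 - γ^L) := by
    have h := geom_sum_mul γ L
    have h2 : ∑ j ∈ Finset.range L, γ^(j+1) = γ * ∑ j ∈ Finset.range L, γ^j := by
      rw [Finset.mul_sum]; apply Finset.sum_congr rfl; intro j _; rw [pow_succ]; ring
    rw [h2]
    linear_combination (-γ) * h
  have hONb : γ * (1 - γ^L) * OPTy ≤ ON := by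
    have hA : (1-γ) * S ≤ ON := by nlinarith [hupper]
    calc γ * (1 - γ^L) * OPTy = (1-γ) * ((∑ j ∈ Finset.range L, γ^(j+1)) * OPTy) := by
          rw [← mul_assoc, hgs]
      _ ≤ (1-γ) * S := by
          apply mul_le_mul_of_nonneg_left hlow2 (by linarith)
      _ ≤ ON := hA
  -- final numeric computation
  rw [hγL] at hONb
  set G := ((L:ℝ)+1) ^ ((1:ℝ)/(L:ℝ)) with hG
  have hGpos : 0 < G := Real.rpow_pos_of_pos hBpos _
  have hγG : γ * G = 1 := by
    rw [hγ, hG, ← Real.rpow_add hBpos,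
      show (-(1:ℝ)/(L:ℝ) + 1/(L:ℝ)) = 0 from by ring, Real.rpow_zero]
  have hfac : (1 + 1/(L:ℝ)) * G * (γ * (1 - ((L:ℝ)+1)⁻¹)) = γ * G := by
    field_simp
    ring
  calc OPTy = (1 + 1/(L:ℝ)) * G * (γ * (1 - ((L:ℝ)+1)⁻¹) * OPTy) := by
        rw [show (1 + 1/(L:ℝ)) * G * (γ * (1 - ((L:ℝ)+1)⁻¹) * OPTy)
            = ((1 + 1/(L:ℝ)) * G * (γ * (1 - ((L:ℝ)+1)⁻¹))) * OPTy from by ring,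
          hfac, hγG, one_mul]
    _ ≤ (1 + 1/(L:ℝ)) * G * ON := by
        apply mul_le_mul_of_nonneg_left hONb (by positivity)
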